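/- A labeled plane tree T has no improper edges if and only if T is an increasing plane tree (i.e., the vertex labels increase along every path from the root). -/

import Mathlib

/-- A plane tree with labeled vertices: a root label together with an ordered
list of child subtrees.  (A plane tree is a rooted tree in which the children
of each node are linearly ordered.) -/
inductive LTree : Type where
  | node : ℕ → List LTree → LTree

namespace LTree

/-- The label of the root. -/
def rootLabel : LTree → ℕ
  | node a _ => a

/-- The list of child subtrees of the root. -/
def children : LTree → List LTree
  | node _ cs => cs

/-- `deg_T(root)`: the number of children of the root. -/
def rootDeg (t : LTree) : ℕ := (children t).length

mutual
  /-- The list of all vertex labels of a tree. -/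
  def labels : LTree → List ℕ
    | node a cs => a :: labelsList cs
  /-- The list of all vertex labels of a forest. -/
  def labelsList : List LTree → List ℕ
    | [] => []
    | c :: rest => labels c ++ labelsList rest
end

/-- `β(v)`: the smallest label occurring in the subtree `t` rooted at `v`. -/
def minLabel (t : LTree) : ℕ := (labels t).foldr min (rootLabel t)

/-- `min { j, β(c₁), …, β(cₖ) }` for a vertex `j` and a list of subtrees `c₁, …, cₖ`. -/
def minOver (j : ℕ) (rest : List LTree) : ℕ := (rest.map minLabel).foldr min j

mutual
  /-- The list of edges of a tree, each recorded as a (parent label, child label)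
  pair, in depth-first order. -/
  def edgeList : LTree → List (ℕ × ℕ)
    | node a cs => edgeListAux a cs
  def edgeListAux : ℕ → List LTree → List (ℕ × ℕ)
    | _, [] => []
    | a, c :: rest => (a, rootLabel c) :: (edgeList c ++ edgeListAux a rest)
end

mutual
  /-- The list of improper edges of a tree: if a vertex `j` has children
  `j₁, …, jₖ` (ordered left to right), the edge `(j, jᵢ)` is improper when
  `β(jᵢ) < min { j, β(j_{i+1}), …, β(jₖ) }`. -/
  def improperEdges : LTree → List (ℕ × ℕ)
    | node a cs => improperEdgesAux a cs
  def improperEdgesAux : ℕ → List LTree → List (ℕ × ℕ)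
    | _, [] => []
    | j, c :: rest =>
        (if minLabel c < minOver j rest then [(j, rootLabel c)] else [])
          ++ improperEdges c ++ improperEdgesAux j rest
end

mutual
  /-- The list of proper (i.e. non-improper) edges of a tree. -/
  def properEdges : LTree → List (ℕ × ℕ)
    | node a cs => properEdgesAux a cs
  def properEdgesAux : ℕ → List LTree → List (ℕ × ℕ)
    | _, [] => []
    | j, c :: rest =>
        (if minLabel c < minOver j rest then [] else [(j, rootLabel c)])
          ++ properEdges c ++ properEdgesAux j rest
end

/-- `impr T`: the number of improper edges of `T`. -/
def impr (t : LTree) : ℕ := (improperEdges t).length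

/-- `prop T`: the number of proper edges of `T`. -/
def propCount (t : LTree) : ℕ := (properEdges t).length

/-- The number of edges of `T`. -/
def edgeCount (t : LTree) : ℕ := (edgeList t).length

/-- `T` is a labeled plane tree with `n` edges: its `n + 1` vertices are labeled
bijectively with `{1, 2, …, n + 1}`. -/
def IsLPT (n : ℕ) (t : LTree) : Prop := (labels t).Perm (List.range' 1 (n + 1))

/-- `T` is increasing: vertex labels increase along every path from the root. -/
inductive Increasing : LTree → Prop where
  | node (a : ℕ) (cs : List LTree) :
      (∀ c ∈ cs, a < rootLabel c) → (∀ c ∈ cs, Increasing c) → Increasing (node a cs)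

lemma foldr_min_le_init (a : ℕ) (l : List ℕ) : l.foldr min a ≤ a := by
  induction l with
  | nil => simp
  | cons x xs ih => exact le_trans (min_le_right _ _) ih

lemma foldr_min_le_mem {a x : ℕ} {l : List ℕ} (h : x ∈ l) : l.foldr min a ≤ x := by
  induction l with
  | nil => simp at h
  | cons y ys ih =>
    rcases List.mem_cons.1 h with rfl | h
    · exact min_le_left _ _
    · exact le_trans (min_le_right _ _) (ih h)

lemma foldr_min_eq {a : ℕ} {l : List ℕ} (h : ∀ x ∈ l, a ≤ x) :
    l.foldr min a = a := by
  induction l with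
  | nil => rfl
  | cons x xs ih =>
    simp only [List.foldr_cons, ih (fun y hy => h y (List.mem_cons_of_mem _ hy))]
    exact min_eq_right (h x (List.mem_cons_self))

lemma foldr_min_mem (a : ℕ) (l : List ℕ) : l.foldr min a = a ∨ l.foldr min a ∈ l := by
  induction l with
  | nil => exact Or.inl rfl
  | cons x xs ih =>
    rcases min_choice x (xs.foldr min a) with h | h
    · exact Or.inr (by rw [List.foldr_cons, h]; exact List.mem_cons_self)
    · rw [List.foldr_cons, h]
      rcases ih with h' | h'
      · exact Or.inl h'
      · exact Or.inr (List.mem_cons_of_mem _ h')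

lemma rootLabel_mem (t : LTree) : rootLabel t ∈ labels t := by
  cases t with
  | node a cs => simp [rootLabel, labels]

lemma minLabel_mem (t : LTree) : minLabel t ∈ labels t := by
  rcases foldr_min_mem (rootLabel t) (labels t) with h | h
  · rw [minLabel, h]; exact rootLabel_mem t
  · exact h

lemma minLabel_le {x : ℕ} {t : LTree} (h : x ∈ labels t) : minLabel t ≤ x :=
  foldr_min_le_mem h

lemma mem_labelsList {x : ℕ} {cs : List LTree} :
    x ∈ labelsList cs ↔ ∃ c ∈ cs, x ∈ labels c := by
  induction cs with
  | nil => simp [labelsList]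
  | cons c rest ih => simp [labelsList, ih]

lemma nodup_of_mem {cs : List LTree} {c : LTree} (hnd : (labelsList cs).Nodup)
    (hc : c ∈ cs) : (labels c).Nodup := by
  induction cs with
  | nil => simp at hc
  | cons c' rest ih =>
    rw [show labelsList (c' :: rest) = labels c' ++ labelsList rest from rfl] at hnd
    rcases List.mem_cons.1 hc with rfl | hc
    · exact hnd.of_append_left
    · exact ih hnd.of_append_right hc

lemma improperAux_cons {a : ℕ} {c : LTree} {rest : List LTree}
    (h : improperEdgesAux a (c :: rest) = []) :
    ¬ minLabel c < minOver a rest ∧ improperEdges c = [] ∧ improperEdgesAux a rest = [] := by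
  rw [show improperEdgesAux a (c :: rest)
      = (if minLabel c < minOver a rest then [(a, rootLabel c)] else [])
        ++ improperEdges c ++ improperEdgesAux a rest from rfl] at h
  rcases List.append_eq_nil_iff.1 h with ⟨h1, h3⟩
  rcases List.append_eq_nil_iff.1 h1 with ⟨h1, h2⟩
  refine ⟨?_, h2, h3⟩
  intro hlt
  rw [if_pos hlt] at h1
  exact List.cons_ne_nil _ _ h1

lemma improper_of_mem {a : ℕ} {cs : List LTree} {c : LTree}
    (h : improperEdgesAux a cs = []) (hc : c ∈ cs) : improperEdges c = [] := by
  induction cs with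
  | nil => simp at hc
  | cons c' rest ih =>
    obtain ⟨_, h2, h3⟩ := improperAux_cons h
    rcases List.mem_cons.1 hc with rfl | hc
    · exact h2
    · exact ih h3 hc

lemma key_min {a : ℕ} {cs : List LTree} (h : improperEdgesAux a cs = [])
    (ha : ∀ c ∈ cs, a ∉ labels c) : ∀ c ∈ cs, a < minLabel c := by
  induction cs with
  | nil => simp
  | cons c' rest ih =>
    obtain ⟨h1, _, h3⟩ := improperAux_cons h
    have hrest : ∀ c ∈ rest, a < minLabel c :=
      ih h3 (fun c hc => ha c (List.mem_cons_of_mem _ hc))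
    have hmo : minOver a rest = a := by
      apply foldr_min_eq
      intro x hx
      rcases List.mem_map.1 hx with ⟨c, hc, rfl⟩
      exact le_of_lt (hrest c hc)
    have hle : a ≤ minLabel c' := by
      rw [hmo] at h1; exact not_lt.1 h1
    intro c hc
    rcases List.mem_cons.1 hc with rfl | hc
    · exact lt_of_le_of_ne hle
        (fun he => ha c (List.mem_cons_self) (he ▸ minLabel_mem c))
    · exact hrest c hc

lemma improperAux_nil_of_increasing (a : ℕ) (cs : List LTree)
    (h1 : ∀ c ∈ cs, a < minLabel c)
    (h2 : ∀ c ∈ cs, improperEdges c = []) : improperEdgesAux a cs = [] := by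
  induction cs with
  | nil => rfl
  | cons c rest ih =>
    rw [show improperEdgesAux a (c :: rest)
        = (if minLabel c < minOver a rest then [(a, rootLabel c)] else [])
          ++ improperEdges c ++ improperEdgesAux a rest from rfl]
    have hnot : ¬ minLabel c < minOver a rest := by
      have : minOver a rest ≤ a := foldr_min_le_init _ _
      have := h1 c (List.mem_cons_self)
      omega
    rw [if_neg hnot, h2 c (List.mem_cons_self),
      ih (fun c' hc' => h1 c' (List.mem_cons_of_mem _ hc'))
         (fun c' hc' => h2 c' (List.mem_cons_of_mem _ hc'))]
    rfl

lemma rootLabel_le_of_increasing {t : LTree} (h : Increasing t) :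
    ∀ x ∈ labels t, rootLabel t ≤ x := by
  induction h with
  | node a cs h1 h2 ih =>
    intro x hx
    rw [show labels (node a cs) = a :: labelsList cs from rfl] at hx
    rcases List.mem_cons.1 hx with rfl | hx
    · exact le_refl _
    · rcases mem_labelsList.1 hx with ⟨c, hc, hxc⟩
      exact le_of_lt (lt_of_lt_of_le (h1 c hc) (ih c hc x hxc))

lemma minLabel_eq_rootLabel {t : LTree} (h : Increasing t) :
    minLabel t = rootLabel t :=
  foldr_min_eq (rootLabel_le_of_increasing h)

lemma improperEdges_nil_of_increasing {t : LTree} (h : Increasing t) :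
    improperEdges t = [] := by
  induction h with
  | node a cs h1 h2 ih =>
    rw [show improperEdges (node a cs) = improperEdgesAux a cs from rfl]
    apply improperAux_nil_of_increasing
    · intro c hc
      rw [minLabel_eq_rootLabel (h2 c hc)]
      exact h1 c hc
    · exact ih

theorem increasing_of_no_improper : ∀ t : LTree, (labels t).Nodup →
    improperEdges t = [] → Increasing t
  | node a cs, hnd, himp => by
    rw [show labels (node a cs) = a :: labelsList cs from rfl,
      List.nodup_cons] at hnd
    obtain ⟨ha, hcs⟩ := hnd
    rw [show improperEdges (node a cs) = improperEdgesAux a cs from rfl] at himp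
    have hmins : ∀ c ∈ cs, a < minLabel c :=
      key_min himp (fun c hc hx => ha (mem_labelsList.2 ⟨c, hc, hx⟩))
    refine Increasing.node a cs
      (fun c hc => lt_of_lt_of_le (hmins c hc) (minLabel_le (rootLabel_mem c)))
      (fun c hc => increasing_of_no_improper c (nodup_of_mem hcs hc)
        (improper_of_mem himp hc))
  termination_by t => sizeOf t
  decreasing_by
    have := List.sizeOf_lt_of_mem hc
    simp [LTree.node.sizeOf_spec]
    omega

end LTree

/-- A labeled plane tree `T` has no improper edges if and only if `T` is an
increasing plane tree. -/
theorem no_improper_iff_increasing (n : ℕ) (T : LTree) (hT : LTree.IsLPT n T) :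
    LTree.impr T = 0 ↔ LTree.Increasing T := by
  rw [LTree.impr, List.length_eq_zero_iff]
  constructor
  · intro h
    exact LTree.increasing_of_no_improper T
      (hT.nodup_iff.2 (List.nodup_range' 1 Nat.one_pos)) h
  · exact LTree.improperEdges_nil_of_increasing
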